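/- arXiv:2307.07311 — 5 statements merged into one kernel-verified Lean document; each statement's English description precedes it below -/
import Mathlib

section
/- Let Λ ≥ max(‖τ‖_∞, ‖κ‖_∞) with κ continuous and nonvanishing on [0,l], and let E(θ) = ∫_0^l (κ² cos²θ + (θ'+τ)²)² / (κ² cos²θ) dt. Then for every θ ∈ W^{1,4}([0,l]) with E(θ) finite, Λ² · E(θ) ≥ (1/16)·‖θ'‖_{L^4}^4 − 2Λ⁴ l. -/
open MeasureTheory Set Real
open scoped ENNReal

lemma stepA_pt (Λ a b : ℝ) (hΛ : 0 < Λ) (ha : 0 ≤ a) (hb : 0 ≤ b) (haΛ : a ≤ Λ^2) :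
    ENNReal.ofReal (b^2) ≤
      ENNReal.ofReal (Λ^2) * (ENNReal.ofReal ((a + b)^2) / ENNReal.ofReal a) := by
  rcases ha.eq_or_lt with h | h
  · rcases hb.eq_or_lt with h2 | h2
    · simp [← h2]
    · rw [← h]
      have hnum : ENNReal.ofReal ((0 + b)^2) ≠ 0 := by
        simp only [zero_add]
        positivity
      rw [ENNReal.ofReal_zero, ENNReal.div_zero hnum, ENNReal.mul_top]
      · exact le_top
      · positivity
  · rw [← ENNReal.ofReal_div_of_pos h, ← ENNReal.ofReal_mul (sq_nonneg Λ)]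
    apply ENNReal.ofReal_le_ofReal
    rw [mul_div_assoc'] at *
    rw [le_div_iff₀ h]
    nlinarith [mul_le_mul_of_nonneg_left haΛ (sq_nonneg b), sq_nonneg b, sq_nonneg (a+b),
      mul_le_mul_of_nonneg_left (pow_le_pow_left₀ hb (le_add_of_nonneg_left ha) 2) (sq_nonneg Λ)]

lemma stepB_pt (Λ x s : ℝ) (hs : |s| ≤ Λ) : x^4 ≤ 16*(x+s)^4 + 16*Λ^4 := by
  rcases le_or_gt (|x|) (2*Λ) with h | h
  · have h1 : x^4 ≤ 16*Λ^4 := by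
      have : |x|^4 ≤ (2*Λ)^4 := pow_le_pow_left₀ (abs_nonneg x) h 4
      rw [Even.pow_abs (by decide)] at this
      nlinarith
    nlinarith [pow_le_pow_left₀ (le_refl (0:ℝ)) (le_refl (0:ℝ)) 4, sq_nonneg ((x+s)^2)]
  · have hΛ0 : 0 ≤ Λ := le_trans (abs_nonneg s) hs
    have h1 : |x|/2 ≤ |x+s| := by
      have h2 : |x| ≤ |x+s| + |s| := by
        calc |x| = |(x+s) + (-s)| := by ring_nf
        _ ≤ |x+s| + |-s| := abs_add_le _ _
        _ = |x+s| + |s| := by rw [abs_neg]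
      linarith
    have h3 : (|x|/2)^4 ≤ |x+s|^4 := pow_le_pow_left₀ (by positivity) h1 4
    rw [Even.pow_abs (by decide)] at h3
    have h4 : (|x|/2)^4 = x^4/16 := by
      rw [div_pow, Even.pow_abs (by decide)]; norm_num
    nlinarith [pow_nonneg hΛ0 4]

/-- The bending energy `E(θ) = ∫_0^l (κ²cos²θ + (θ'+τ)²)² / (κ²cos²θ) dt`,
with values in `[0,∞]` (the integrand is `+∞` where the denominator vanishes
and the numerator is positive). -/
noncomputable def bendingEnergy (l : ℝ) (κ τ θ θ' : ℝ → ℝ) : ℝ≥0∞ :=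
  ∫⁻ t in Icc (0:ℝ) l,
    ENNReal.ofReal ((κ t ^ 2 * cos (θ t) ^ 2 + (θ' t + τ t) ^ 2) ^ 2) /
      ENNReal.ofReal (κ t ^ 2 * cos (θ t) ^ 2)

/-- Coercivity estimate: `Λ² E(θ) ≥ (1/16)‖θ'‖_{L⁴}⁴ − 2Λ⁴ l`. -/
theorem coercivity_estimate (l : ℝ) (hl : 0 < l) (κ τ θ θ' : ℝ → ℝ)
    (hκ : ContinuousOn κ (Icc 0 l)) (hκ0 : ∀ t ∈ Icc (0:ℝ) l, κ t ≠ 0)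
    (hτ : ContinuousOn τ (Icc 0 l))
    (Λ : ℝ) (hΛτ : ∀ t ∈ Icc (0:ℝ) l, |τ t| ≤ Λ) (hΛκ : ∀ t ∈ Icc (0:ℝ) l, |κ t| ≤ Λ)
    (hrep : ∀ x ∈ Icc (0:ℝ) l, θ x = θ 0 + ∫ t in (0:ℝ)..x, θ' t)
    (hLp : MemLp θ' 4 (volume.restrict (Icc (0:ℝ) l)))
    (hfin : bendingEnergy l κ τ θ θ' ≠ ∞) :
    (1/16) * (eLpNorm θ' 4 (volume.restrict (Icc (0:ℝ) l))).toReal ^ 4 - 2 * Λ ^ 4 * l ≤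
      Λ ^ 2 * (bendingEnergy l κ τ θ θ').toReal := by
  set μ := volume.restrict (Icc (0:ℝ) l) with hμ
  have h0mem : (0:ℝ) ∈ Icc (0:ℝ) l := ⟨le_refl 0, hl.le⟩
  have hΛ : 0 < Λ := lt_of_lt_of_le (abs_pos.mpr (hκ0 0 h0mem)) (hΛκ 0 h0mem)
  set E := bendingEnergy l κ τ θ θ' with hE
  set I := ∫⁻ t, ENNReal.ofReal ((θ' t + τ t)^4) ∂μ with hI
  -- Step A : I ≤ ofReal Λ² * E
  have hA : I ≤ ENNReal.ofReal (Λ^2) * E := by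
    rw [hE, bendingEnergy, ← lintegral_const_mul' _ _ ENNReal.ofReal_ne_top]
    refine lintegral_mono_ae ?_
    filter_upwards [ae_restrict_mem measurableSet_Icc] with t ht
    have h := stepA_pt Λ (κ t ^ 2 * cos (θ t) ^ 2) ((θ' t + τ t)^2) hΛ (by positivity)
      (sq_nonneg _) ?_
    · convert h using 2
      ring
    · calc κ t ^ 2 * cos (θ t) ^ 2 ≤ Λ^2 * 1 := by
            apply mul_le_mul _ _ (sq_nonneg _) (sq_nonneg Λ)
            · rw [← sq_abs]
              exact pow_le_pow_left₀ (abs_nonneg _) (hΛκ t ht) 2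
            · rw [← sq_abs, ← one_pow 2]
              exact pow_le_pow_left₀ (abs_nonneg _) (abs_cos_le_one _) 2
        _ = Λ^2 := mul_one _
  have hIfin : I ≠ ∞ := by
    refine ne_top_of_le_ne_top ?_ hA
    exact ENNReal.mul_ne_top ENNReal.ofReal_ne_top hfin
  -- Step B : J ≤ 16 I + ofReal(16Λ⁴) l
  set J := ∫⁻ t, ENNReal.ofReal (θ' t ^ 4) ∂μ with hJ
  have hB : J ≤ ENNReal.ofReal 16 * I + ENNReal.ofReal (16*Λ^4) * ENNReal.ofReal l := by
    have hmono : J ≤ ∫⁻ t, (ENNReal.ofReal 16 * ENNReal.ofReal ((θ' t + τ t)^4)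
        + ENNReal.ofReal (16*Λ^4)) ∂μ := by
      refine lintegral_mono_ae ?_
      filter_upwards [ae_restrict_mem measurableSet_Icc] with t ht
      rw [← ENNReal.ofReal_mul (by norm_num : (0:ℝ) ≤ 16),
        ← ENNReal.ofReal_add (by positivity) (by positivity)]
      exact ENNReal.ofReal_le_ofReal (stepB_pt Λ (θ' t) (τ t) (hΛτ t ht))
    calc J ≤ _ := hmono
      _ = ENNReal.ofReal 16 * I + ENNReal.ofReal (16*Λ^4) * ENNReal.ofReal l := by
          rw [lintegral_add_right _ measurable_const, lintegral_const_mul' _ _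
            ENNReal.ofReal_ne_top, lintegral_const, hμ, Measure.restrict_apply_univ,
            Real.volume_Icc, sub_zero]
  have hJfin : J ≠ ∞ := by
    refine ne_top_of_le_ne_top ?_ hB
    exact ENNReal.add_ne_top.mpr ⟨ENNReal.mul_ne_top ENNReal.ofReal_ne_top hIfin,
      ENNReal.mul_ne_top ENNReal.ofReal_ne_top ENNReal.ofReal_ne_top⟩
  -- identify J with the L⁴ norm
  have hnorm : (eLpNorm θ' 4 μ).toReal ^ 4 = J.toReal := by
    rw [eLpNorm_eq_lintegral_rpow_enorm_toReal (by norm_num) (by norm_num)]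
    have h4 : ((4:ℝ≥0∞)).toReal = (4:ℝ) := by norm_num
    rw [h4]
    have hEq : ∫⁻ t, (‖θ' t‖₊ : ℝ≥0∞) ^ (4:ℝ) ∂μ = J := by
      refine lintegral_congr fun t => ?_
      have h1 : ((‖θ' t‖₊ : ℝ≥0∞)) ^ (4:ℝ) = ((‖θ' t‖₊ : ℝ≥0∞)) ^ (4:ℕ) := by
        rw [← ENNReal.rpow_natCast]; norm_num
      rw [h1, (show (‖θ' t‖₊ : ℝ≥0∞) = ENNReal.ofReal |θ' t| from Real.enorm_eq_ofReal_abs _), ← ENNReal.ofReal_pow (abs_nonneg _),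
        Even.pow_abs (by decide)]
    rw [show ∫⁻ t, ‖θ' t‖ₑ ^ (4:ℝ) ∂μ = J from hEq, ← ENNReal.toReal_rpow, ← Real.rpow_natCast (J.toReal ^ (1/(4:ℝ))) 4,
      ← Real.rpow_mul ENNReal.toReal_nonneg]
    norm_num
  -- put everything together in ℝ
  have hi : I.toReal ≤ Λ^2 * E.toReal := by
    have := ENNReal.toReal_mono (ENNReal.mul_ne_top ENNReal.ofReal_ne_top hfin) hA
    rwa [ENNReal.toReal_mul, ENNReal.toReal_ofReal (sq_nonneg Λ)] at this
  have hn : J.toReal ≤ 16 * I.toReal + 16 * Λ^4 * l := by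
    have hfin2 : ENNReal.ofReal 16 * I + ENNReal.ofReal (16*Λ^4) * ENNReal.ofReal l ≠ ∞ :=
      ENNReal.add_ne_top.mpr ⟨ENNReal.mul_ne_top ENNReal.ofReal_ne_top hIfin,
        ENNReal.mul_ne_top ENNReal.ofReal_ne_top ENNReal.ofReal_ne_top⟩
    have := ENNReal.toReal_mono hfin2 hB
    rw [ENNReal.toReal_add (ENNReal.mul_ne_top ENNReal.ofReal_ne_top hIfin)
        (ENNReal.mul_ne_top ENNReal.ofReal_ne_top ENNReal.ofReal_ne_top),
      ENNReal.toReal_mul, ENNReal.toReal_mul, ENNReal.toReal_ofReal (by norm_num : (0:ℝ) ≤ 16),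
      ENNReal.toReal_ofReal (by positivity), ENNReal.toReal_ofReal hl.le] at this
    linarith
  have hpos : 0 ≤ Λ^4 * l := by positivity
  rw [hnorm]
  linarith
end

section
/- Suppose 0 ≤ a < b ≤ l, τ is continuous and nonvanishing on [a,b], κ is continuous on [a,b], and θ ∈ W^{1,4}([a,b]) has finite localized energy E_I(θ) = ∫_a^b (κ² cos²θ + (θ'+τ)²)²/(κ² cos²θ) dt. Then |θ(a) − θ(b)| ≥ A(b−a) − B^{1/2}(b−a)^{3/4} E_I(θ)^{1/4}, where A = min_{t∈[a,b]} |τ(t)| and B = max_{t∈[a,b]} |κ(t) cos θ(t)|. -/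
open MeasureTheory Set Real
open scoped ENNReal

/-- The localized bending energy `E_I(θ) = ∫_a^b (κ²cos²θ + (θ'+τ)²)²/(κ²cos²θ) dt`. -/
noncomputable def locEnergy (a b : ℝ) (κ τ θ θ' : ℝ → ℝ) : ℝ≥0∞ :=
  ∫⁻ t in Icc a b,
    ENNReal.ofReal ((κ t ^ 2 * cos (θ t) ^ 2 + (θ' t + τ t) ^ 2) ^ 2) /
      ENNReal.ofReal (κ t ^ 2 * cos (θ t) ^ 2)

/-- Lemma 6.1: if `τ` is continuous and nonvanishing on `[a,b]`, then
`|θ(a) − θ(b)| ≥ A(b−a) − B^{1/2}(b−a)^{3/4} E_I(θ)^{1/4}`, where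
`A = min_{[a,b]} |τ|` and `B = max_{[a,b]} |κ cos θ|`. -/
theorem singularities_lemma (l a b : ℝ) (hab : 0 ≤ a) (h : a < b) (hbl : b ≤ l)
    (κ τ θ θ' : ℝ → ℝ)
    (hκ : ContinuousOn κ (Icc a b))
    (hτ : ContinuousOn τ (Icc a b)) (hτ0 : ∀ t ∈ Icc a b, τ t ≠ 0)
    (hrep : ∀ x ∈ Icc a b, θ x = θ a + ∫ t in a..x, θ' t)
    (hLp : MemLp θ' 4 (volume.restrict (Icc a b)))
    (hfin : locEnergy a b κ τ θ θ' ≠ ∞) :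
    sInf ((fun t => |τ t|) '' Icc a b) * (b - a) -
        (sSup ((fun t => |κ t * cos (θ t)|) '' Icc a b)) ^ ((1:ℝ)/2) *
          (b - a) ^ ((3:ℝ)/4) * (locEnergy a b κ τ θ θ').toReal ^ ((1:ℝ)/4) ≤
      |θ a - θ b| := by
  have hba : (0:ℝ) ≤ b - a := by linarith
  have hmem_a : a ∈ Icc a b := ⟨le_refl a, h.le⟩
  have hmem_b : b ∈ Icc a b := ⟨h.le, le_refl b⟩
  set μ := volume.restrict (Icc a b) with hμdef
  haveI : IsFiniteMeasure μ := by
    constructor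
    rw [hμdef, Measure.restrict_apply_univ, Real.volume_Icc]
    exact ENNReal.ofReal_lt_top
  -- integrability of θ'
  have hθ'int : IntegrableOn θ' (Icc a b) := by
    have h1 : MemLp θ' 1 μ := hLp.mono_exponent (by norm_num)
    exact memLp_one_iff_integrable.mp h1
  have hτint : IntegrableOn τ (Icc a b) := hτ.integrableOn_Icc
  -- continuity of θ on [a,b]
  have hθcont : ContinuousOn θ (Icc a b) := by
    have hc : ContinuousOn (fun x => θ a + ∫ t in Ioc a x, θ' t) (Icc a b) :=
      continuousOn_const.add (intervalIntegral.continuousOn_primitive hθ'int)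
    refine (hc.congr ?_)
    intro x hx
    rw [hrep x hx, intervalIntegral.integral_of_le hx.1]
  -- A and B basic facts
  set A := sInf ((fun t => |τ t|) '' Icc a b) with hAdef
  set B := sSup ((fun t => |κ t * cos (θ t)|) '' Icc a b) with hBdef
  have hbddA : BddBelow ((fun t => |τ t|) '' Icc a b) := by
    refine ⟨0, ?_⟩
    rintro x ⟨t, -, rfl⟩
    exact abs_nonneg _
  have hAle : ∀ t ∈ Icc a b, A ≤ |τ t| := fun t ht =>
    csInf_le hbddA (mem_image_of_mem _ ht)
  have hA0 : 0 ≤ A := by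
    refine le_csInf ⟨_, mem_image_of_mem _ hmem_a⟩ ?_
    rintro x ⟨t, -, rfl⟩
    exact abs_nonneg _
  have hKcont : ContinuousOn (fun t => |κ t * cos (θ t)|) (Icc a b) :=
    (hκ.mul (Real.continuous_cos.comp_continuousOn hθcont)).abs
  have hBbdd : BddAbove ((fun t => |κ t * cos (θ t)|) '' Icc a b) :=
    (isCompact_Icc.image_of_continuousOn hKcont).bddAbove
  have hBle : ∀ t ∈ Icc a b, |κ t * cos (θ t)| ≤ B := fun t ht =>
    le_csSup hBbdd (mem_image_of_mem _ ht)
  have hB0 : 0 ≤ B := le_trans (abs_nonneg _) (hBle a hmem_a)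
  -- sign of τ
  have hsign : (∀ t ∈ Icc a b, 0 < τ t) ∨ (∀ t ∈ Icc a b, τ t < 0) := by
    rcases lt_or_gt_of_ne (hτ0 a hmem_a) with hn | hp
    · right
      intro t ht
      rcases lt_or_gt_of_ne (hτ0 t ht) with h' | h'
      · exact h'
      · exfalso
        have hsub : uIcc a t ⊆ Icc a b := by
          rw [uIcc_of_le ht.1]; exact Icc_subset_Icc le_rfl ht.2
        obtain ⟨s, hs, hs0⟩ := intermediate_value_uIcc (hτ.mono hsub)
          (mem_uIcc.mpr (Or.inl ⟨hn.le, h'.le⟩))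
        exact hτ0 s (hsub hs) hs0
    · left
      intro t ht
      rcases lt_or_gt_of_ne (hτ0 t ht) with h' | h'
      · exfalso
        have hsub : uIcc a t ⊆ Icc a b := by
          rw [uIcc_of_le ht.1]; exact Icc_subset_Icc le_rfl ht.2
        obtain ⟨s, hs, hs0⟩ := intermediate_value_uIcc (hτ.mono hsub)
          (mem_uIcc.mpr (Or.inr ⟨h'.le, hp.le⟩))
        exact hτ0 s (hsub hs) hs0
      · exact h'
  -- measurability
  have hκm : AEMeasurable κ μ := hκ.aemeasurable measurableSet_Icc
  have hτm : AEMeasurable τ μ := hτ.aemeasurable measurableSet_Icc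
  have hθm : AEMeasurable θ μ := hθcont.aemeasurable measurableSet_Icc
  have hθ'm : AEMeasurable θ' μ := hLp.aestronglyMeasurable.aemeasurable
  have hsm : AEMeasurable (fun t => θ' t + τ t) μ := hθ'm.add hτm
  have hgrm : AEMeasurable (fun t => κ t ^ 2 * cos (θ t) ^ 2) μ :=
    (hκm.pow_const 2).mul ((Real.measurable_cos.comp_aemeasurable hθm).pow_const 2)
  have hgr0 : ∀ t, 0 ≤ κ t ^ 2 * cos (θ t) ^ 2 := fun t =>
    mul_nonneg (sq_nonneg _) (sq_nonneg _)
  set F : ℝ → ℝ≥0∞ := fun t => ENNReal.ofReal |θ' t + τ t| with hFdef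
  set G : ℝ → ℝ≥0∞ := fun t => ENNReal.ofReal (κ t ^ 2 * cos (θ t) ^ 2) with hGdef
  set Φ : ℝ → ℝ≥0∞ := fun t =>
    ENNReal.ofReal ((κ t ^ 2 * cos (θ t) ^ 2 + (θ' t + τ t) ^ 2) ^ 2) / G t with hΦdef
  have hFm : AEMeasurable F μ := ENNReal.measurable_ofReal.comp_aemeasurable (_root_.continuous_abs.measurable.comp_aemeasurable hsm)
  have hGm : AEMeasurable G μ := ENNReal.measurable_ofReal.comp_aemeasurable hgrm
  have hΦm : AEMeasurable Φ μ := by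
    refine AEMeasurable.div ?_ hGm
    exact ENNReal.measurable_ofReal.comp_aemeasurable
      (((hgrm.add (hsm.pow_const 2))).pow_const 2)
  have hEeq : locEnergy a b κ τ θ θ' = ∫⁻ t, Φ t ∂μ := rfl
  -- on the set where G vanishes, F vanishes a.e.
  have hae0 : ∀ᵐ t ∂μ, G t = 0 → F t = 0 := by
    rw [hEeq] at hfin
    filter_upwards [ae_lt_top' hΦm hfin] with t hΦt hGt
    have hgr : κ t ^ 2 * cos (θ t) ^ 2 = 0 := by
      have := ENNReal.ofReal_eq_zero.mp hGt
      linarith [hgr0 t]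
    by_contra hF
    have hs0 : θ' t + τ t ≠ 0 := by
      intro h0
      apply hF
      simp [hFdef, h0]
    have hnum : ENNReal.ofReal ((κ t ^ 2 * cos (θ t) ^ 2 + (θ' t + τ t) ^ 2) ^ 2) ≠ 0 := by
      rw [hgr, zero_add]
      rw [ne_eq, ENNReal.ofReal_eq_zero, not_le]; exact
        (by positivity : (0:ℝ) < ((θ' t + τ t) ^ 2) ^ 2)
    have : Φ t = ∞ := by
      rw [hΦdef]
      simp only [hGt, ENNReal.div_zero hnum]
    exact absurd (this ▸ hΦt) (lt_irrefl _)
  -- Hölder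
  set u : ℝ → ℝ≥0∞ := fun t => (F t ^ (4:ℝ) / G t) ^ ((1:ℝ)/4) with hudef
  set v : ℝ → ℝ≥0∞ := fun t => G t ^ ((1:ℝ)/4) with hvdef
  have hum : AEMeasurable u μ := ((hFm.pow_const _).div hGm).pow_const _
  have hvm : AEMeasurable v μ := hGm.pow_const _
  have hFuv : ∀ᵐ t ∂μ, F t ≤ (u * v) t := by
    filter_upwards [hae0] with t h0
    by_cases hG : G t = 0
    · rw [h0 hG]; exact zero_le
    · have hGtop : G t ≠ ∞ := ENNReal.ofReal_ne_top
      have : (u * v) t = F t := by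
        simp only [Pi.mul_apply, hudef, hvdef]
        rw [← ENNReal.mul_rpow_of_nonneg _ _ (by norm_num : (0:ℝ) ≤ 1/4),
          ENNReal.div_mul_cancel hG hGtop, ← ENNReal.rpow_mul]
        norm_num
      rw [this]
  have hconj : Real.HolderConjugate 4 (4/3) := Real.holderConjugate_iff.mpr ⟨by norm_num, by norm_num⟩
  have hHolder : ∫⁻ t, F t ∂μ ≤
      (∫⁻ t, (F t ^ (4:ℝ) / G t) ∂μ) ^ ((1:ℝ)/4) *
        (∫⁻ t, G t ^ ((1:ℝ)/3) ∂μ) ^ ((3:ℝ)/4) := by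
    calc ∫⁻ t, F t ∂μ ≤ ∫⁻ t, (u * v) t ∂μ := lintegral_mono_ae hFuv
      _ ≤ (∫⁻ t, u t ^ (4:ℝ) ∂μ) ^ (1/(4:ℝ)) * (∫⁻ t, v t ^ ((4:ℝ)/3) ∂μ) ^ (1/((4:ℝ)/3)) :=
          ENNReal.lintegral_mul_le_Lp_mul_Lq μ hconj hum hvm
      _ = (∫⁻ t, (F t ^ (4:ℝ) / G t) ∂μ) ^ ((1:ℝ)/4) *
            (∫⁻ t, G t ^ ((1:ℝ)/3) ∂μ) ^ ((3:ℝ)/4) := by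
          congr 1
          · congr 1
            refine lintegral_congr fun t => ?_
            rw [hudef, ← ENNReal.rpow_mul]
            norm_num
          · rw [show 1/((4:ℝ)/3) = (3:ℝ)/4 by norm_num]
            congr 1
            refine lintegral_congr fun t => ?_
            rw [hvdef, ← ENNReal.rpow_mul]
            norm_num
  -- first factor bounded by energy
  have hbound1 : ∫⁻ t, (F t ^ (4:ℝ) / G t) ∂μ ≤ locEnergy a b κ τ θ θ' := by
    rw [hEeq]
    refine lintegral_mono fun t => ?_
    rw [hFdef]
    simp only
    rw [ENNReal.ofReal_rpow_of_nonneg (abs_nonneg _) (by norm_num)]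
    refine ENNReal.div_le_div_right (ENNReal.ofReal_le_ofReal ?_) _
    have h1 : |θ' t + τ t| ^ (4:ℝ) = ((θ' t + τ t) ^ 2) ^ 2 := by
      rw [show (4:ℝ) = ((4:ℕ):ℝ) by norm_num, Real.rpow_natCast]
      rw [← abs_pow]
      rw [show ((θ' t + τ t)^2)^2 = (θ' t + τ t)^4 by ring]
      exact abs_of_nonneg (by positivity)
    rw [h1]
    have := hgr0 t
    nlinarith [sq_nonneg (θ' t + τ t)]
  -- second factor bounded by constant
  have hbound2 : ∫⁻ t, G t ^ ((1:ℝ)/3) ∂μ ≤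
      ENNReal.ofReal ((B ^ 2) ^ ((1:ℝ)/3)) * ENNReal.ofReal (b - a) := by
    have hptwise : ∀ᵐ t ∂μ, G t ^ ((1:ℝ)/3) ≤ ENNReal.ofReal ((B ^ 2) ^ ((1:ℝ)/3)) := by
      filter_upwards [ae_restrict_mem measurableSet_Icc] with t ht
      rw [hGdef]
      simp only
      rw [ENNReal.ofReal_rpow_of_nonneg (hgr0 t) (by norm_num)]
      refine ENNReal.ofReal_le_ofReal ?_
      refine Real.rpow_le_rpow (hgr0 t) ?_ (by norm_num)
      have : κ t ^ 2 * cos (θ t) ^ 2 = |κ t * cos (θ t)| ^ 2 := by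
        rw [sq_abs]; ring
      rw [this]
      exact pow_le_pow_left₀ (abs_nonneg _) (hBle t ht) 2
    calc ∫⁻ t, G t ^ ((1:ℝ)/3) ∂μ
        ≤ ∫⁻ _, ENNReal.ofReal ((B ^ 2) ^ ((1:ℝ)/3)) ∂μ := lintegral_mono_ae hptwise
      _ = ENNReal.ofReal ((B ^ 2) ^ ((1:ℝ)/3)) * ENNReal.ofReal (b - a) := by
          rw [lintegral_const, hμdef, Measure.restrict_apply_univ, Real.volume_Icc]
  -- put together the lintegral bound
  set E := locEnergy a b κ τ θ θ' with hE
  have hmain : ∫⁻ t, F t ∂μ ≤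
      E ^ ((1:ℝ)/4) *
        ((ENNReal.ofReal ((B ^ 2) ^ ((1:ℝ)/3)) * ENNReal.ofReal (b - a)) ^ ((3:ℝ)/4)) := by
    refine le_trans hHolder ?_
    exact mul_le_mul' (ENNReal.rpow_le_rpow hbound1 (by norm_num))
      (ENNReal.rpow_le_rpow hbound2 (by norm_num))
  -- the right-hand side in real form
  have hRHS : (E ^ ((1:ℝ)/4) *
      ((ENNReal.ofReal ((B ^ 2) ^ ((1:ℝ)/3)) * ENNReal.ofReal (b - a)) ^ ((3:ℝ)/4))).toReal
      = B ^ ((1:ℝ)/2) * (b - a) ^ ((3:ℝ)/4) * E.toReal ^ ((1:ℝ)/4) := by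
    rw [ENNReal.toReal_mul, ← ENNReal.toReal_rpow, ← ENNReal.toReal_rpow,
      ENNReal.toReal_mul, ENNReal.toReal_ofReal (by positivity),
      ENNReal.toReal_ofReal hba]
    rw [Real.mul_rpow (by positivity) hba, ← Real.rpow_natCast B 2,
      ← Real.rpow_mul hB0, ← Real.rpow_mul hB0]
    norm_num
    ring
  have hRHSne : E ^ ((1:ℝ)/4) *
      ((ENNReal.ofReal ((B ^ 2) ^ ((1:ℝ)/3)) * ENNReal.ofReal (b - a)) ^ ((3:ℝ)/4)) ≠ ∞ := by
    apply ENNReal.mul_ne_top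
    · exact ENNReal.rpow_ne_top_of_nonneg (by norm_num) hfin
    · refine ENNReal.rpow_ne_top_of_nonneg (by norm_num) ?_
      exact ENNReal.mul_ne_top ENNReal.ofReal_ne_top ENNReal.ofReal_ne_top
  -- convert to a real integral bound
  have hsint : IntegrableOn (fun t => θ' t + τ t) (Icc a b) := hθ'int.add hτint
  have habsint : IntegrableOn (fun t => |θ' t + τ t|) (Icc a b) := hsint.abs
  have hreal : ∫ t in Icc a b, |θ' t + τ t| ≤
      B ^ ((1:ℝ)/2) * (b - a) ^ ((3:ℝ)/4) * E.toReal ^ ((1:ℝ)/4) := by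
    have heq : ∫ t in Icc a b, |θ' t + τ t| = (∫⁻ t, F t ∂μ).toReal := by
      rw [integral_eq_lintegral_of_nonneg_ae
        (Filter.Eventually.of_forall fun t => abs_nonneg _)
        ((_root_.continuous_abs.measurable.comp_aemeasurable hsm).aestronglyMeasurable)]
    rw [heq, ← hRHS]
    exact ENNReal.toReal_mono hRHSne hmain
  -- the basic identity for θ b - θ a
  have hθdiff : θ b - θ a = ∫ t in Icc a b, θ' t := by
    rw [hrep b hmem_b, intervalIntegral.integral_of_le h.le,
      ← MeasureTheory.integral_Icc_eq_integral_Ioc]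
    ring
  -- lower bound for |∫ τ|
  have hμIcc : (μ univ).toReal = b - a := by
    rw [hμdef, Measure.restrict_apply_univ, Real.volume_Icc, ENNReal.toReal_ofReal hba]
  have hτlow : A * (b - a) ≤ |∫ t in Icc a b, τ t| := by
    rcases hsign with hp | hn
    · have h1 : ∫ t in Icc a b, (A:ℝ) ≤ ∫ t in Icc a b, τ t := by
        refine setIntegral_mono_on (integrableOn_const ?_) hτint
          measurableSet_Icc ?_
        · rw [Real.volume_Icc]; exact ENNReal.ofReal_ne_top
        · intro t ht
          calc A ≤ |τ t| := hAle t ht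
            _ = τ t := abs_of_pos (hp t ht)
      rw [setIntegral_const] at h1
      rw [measureReal_def, Real.volume_Icc, ENNReal.toReal_ofReal hba, smul_eq_mul, mul_comm] at h1
      calc A * (b - a) ≤ ∫ t in Icc a b, τ t := h1
        _ ≤ |∫ t in Icc a b, τ t| := le_abs_self _
    · have h1 : ∫ t in Icc a b, τ t ≤ ∫ t in Icc a b, (-A:ℝ) := by
        refine setIntegral_mono_on hτint (integrableOn_const ?_)
          measurableSet_Icc ?_
        · rw [Real.volume_Icc]; exact ENNReal.ofReal_ne_top
        · intro t ht
          have : A ≤ |τ t| := hAle t ht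
          rw [abs_of_neg (hn t ht)] at this
          linarith
      rw [setIntegral_const] at h1
      rw [measureReal_def, Real.volume_Icc, ENNReal.toReal_ofReal hba, smul_eq_mul] at h1
      calc A * (b - a) = -((b - a) * -A) := by ring
        _ ≤ -(∫ t in Icc a b, τ t) := by linarith
        _ ≤ |∫ t in Icc a b, τ t| := neg_le_abs _
  -- final assembly
  have hsplit : ∫ t in Icc a b, τ t =
      (∫ t in Icc a b, (θ' t + τ t)) - ∫ t in Icc a b, θ' t := by
    rw [integral_add hθ'int hτint]
    ring
  have habs1 : |∫ t in Icc a b, (θ' t + τ t)| ≤ ∫ t in Icc a b, |θ' t + τ t| := by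
    simpa [Real.norm_eq_abs] using
      MeasureTheory.norm_integral_le_integral_norm (μ := μ) (fun t => θ' t + τ t)
  have hfinal : A * (b - a) ≤ (∫ t in Icc a b, |θ' t + τ t|) + |θ a - θ b| := by
    calc A * (b - a) ≤ |∫ t in Icc a b, τ t| := hτlow
      _ ≤ |∫ t in Icc a b, (θ' t + τ t)| + |∫ t in Icc a b, θ' t| := by
          rw [hsplit]; exact abs_sub _ _
      _ ≤ (∫ t in Icc a b, |θ' t + τ t|) + |θ a - θ b| := by
          have : |∫ t in Icc a b, θ' t| = |θ a - θ b| := by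
            rw [← hθdiff, abs_sub_comm]
          rw [this]
          exact add_le_add_left habs1 _
  linarith [hreal, hfinal]
end

section
/- Suppose τ is a constant function on [0,l] with |τ| > nπ/l + max_{t∈[0,l]} |κ(t)| for some n ∈ ℕ, and let θ ∈ W^{1,4}([0,l]) satisfy E(θ) ≤ K²l, where K = max |κ| and E(θ) = ∫_0^l (κ² cos²θ + (θ'+τ)²)²/(κ² cos²θ) dt. Then |θ(0) − θ(l)| > nπ. -/
open MeasureTheory Set Real
open scoped ENNReal

private lemma amgm_div (a b : ℝ) (ha : 0 ≤ a) (hb : 0 ≤ b) :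
    ENNReal.ofReal (4 * b) ≤ ENNReal.ofReal ((a + b) ^ 2) / ENNReal.ofReal a := by
  rcases eq_or_lt_of_le ha with h | h
  · rcases eq_or_lt_of_le hb with h' | h'
    · simp [← h, ← h']
    · rw [← h, ENNReal.ofReal_zero, ENNReal.div_zero (by positivity)]
      exact le_top
  · rw [← ENNReal.ofReal_div_of_pos h]
    refine ENNReal.ofReal_le_ofReal ?_
    rw [le_div_iff₀ h]
    nlinarith [sq_nonneg (a - b)]

/-- For constant torsion `τ` with `|τ| > nπ/l + max|κ|` and any `θ` with
`E(θ) ≤ K²l` (where `K = max|κ|`), one has `|θ(0) − θ(l)| > nπ`. -/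
theorem endpoint_gap (l : ℝ) (hl : 0 < l) (κ θ θ' : ℝ → ℝ) (τ : ℝ) (n : ℕ)
    (hκ : ContinuousOn κ (Icc 0 l)) (hκ0 : ∀ t ∈ Icc (0:ℝ) l, κ t ≠ 0)
    (K : ℝ) (hK : K = sSup ((fun t => |κ t|) '' Icc (0:ℝ) l))
    (hτ : |τ| > n * π / l + K)
    (hrep : ∀ x ∈ Icc (0:ℝ) l, θ x = θ 0 + ∫ t in (0:ℝ)..x, θ' t)
    (hLp : MemLp θ' 4 (volume.restrict (Icc (0:ℝ) l)))
    (hE : bendingEnergy l κ (fun _ => τ) θ θ' ≤ ENNReal.ofReal (K ^ 2 * l)) :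
    |θ 0 - θ l| > n * π := by
  set μ := volume.restrict (Icc (0:ℝ) l) with hμ
  haveI : IsFiniteMeasure μ :=
    ⟨by rw [hμ, Measure.restrict_apply_univ, Real.volume_Icc]; exact ENNReal.ofReal_lt_top⟩
  -- K bounds |κ| and K > 0
  have hKb : ∀ t ∈ Icc (0:ℝ) l, |κ t| ≤ K := by
    intro t ht
    rw [hK]
    exact le_csSup ((isCompact_Icc.image_of_continuousOn hκ.abs).bddAbove) ⟨t, ht, rfl⟩
  have h0mem : (0:ℝ) ∈ Icc (0:ℝ) l := ⟨le_refl _, hl.le⟩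
  have hK0 : 0 < K := lt_of_lt_of_le (abs_pos.2 (hκ0 0 h0mem)) (hKb 0 h0mem)
  set f : ℝ → ℝ := fun t => θ' t + τ with hf
  -- f ∈ L²
  have hf2 : MemLp f 2 μ :=
    (hLp.mono_exponent (by norm_num)).add (memLp_const τ)
  have hsq : Integrable (fun t => f t ^ 2) μ := hf2.integrable_sq
  have hintθ' : Integrable θ' μ := hLp.integrable (by norm_num)
  have hintf : Integrable f μ := hintθ'.add (integrable_const τ)
  -- pointwise bound gives lintegral bound
  have h1 : ∫⁻ t in Icc (0:ℝ) l, ENNReal.ofReal (4 * f t ^ 2) ≤ ENNReal.ofReal (K ^ 2 * l) := by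
    refine le_trans (lintegral_mono_ae ?_) hE
    refine (ae_restrict_iff' measurableSet_Icc).2 (Filter.Eventually.of_forall fun t _ => ?_)
    exact amgm_div _ _ (by positivity) (sq_nonneg _)
  have h4 : (ENNReal.ofReal 4 : ℝ≥0∞) = 4 := by norm_num
  have h1' : ∫⁻ t in Icc (0:ℝ) l, ENNReal.ofReal (f t ^ 2) ≤ ENNReal.ofReal (K ^ 2 * l / 4) := by
    have heq : ∫⁻ t in Icc (0:ℝ) l, ENNReal.ofReal (4 * f t ^ 2)
        = 4 * ∫⁻ t in Icc (0:ℝ) l, ENNReal.ofReal (f t ^ 2) := by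
      rw [← lintegral_const_mul' 4 _ (by norm_num)]
      congr 1
      funext t
      rw [ENNReal.ofReal_mul (by norm_num), h4]
    rw [heq] at h1
    rw [ENNReal.ofReal_div_of_pos (by norm_num), h4]
    rw [ENNReal.le_div_iff_mul_le (Or.inl (by norm_num)) (Or.inl (by norm_num))]
    rwa [mul_comm]
  -- real integral bound on ∫ f²
  have h2 : ∫ t in Icc (0:ℝ) l, f t ^ 2 ≤ K ^ 2 * l / 4 := by
    rw [MeasureTheory.integral_eq_lintegral_of_nonneg_ae
      (Filter.Eventually.of_forall fun t => sq_nonneg (f t))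
      (hsq.aestronglyMeasurable)]
    calc (∫⁻ t, ENNReal.ofReal (f t ^ 2) ∂μ).toReal
        ≤ (ENNReal.ofReal (K ^ 2 * l / 4)).toReal :=
          ENNReal.toReal_mono ENNReal.ofReal_ne_top h1'
      _ = K ^ 2 * l / 4 := ENNReal.toReal_ofReal (by positivity)
  -- ∫|f| ≤ K*l/2 via |f| ≤ f²/K + K/4
  have hvol : (volume (Icc (0:ℝ) l)).toReal = l := by
    rw [Real.volume_Icc]; simp [hl.le]
  have h3 : ∫ t in Icc (0:ℝ) l, |f t| ≤ K * l / 2 := by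
    have hgi : Integrable (fun t => f t ^ 2 / K + K / 4) μ :=
      (hsq.div_const K).add (integrable_const _)
    have hmono : ∫ t in Icc (0:ℝ) l, |f t| ≤ ∫ t in Icc (0:ℝ) l, (f t ^ 2 / K + K / 4) := by
      refine integral_mono_of_nonneg (Filter.Eventually.of_forall fun t => abs_nonneg _) hgi
        (Filter.Eventually.of_forall fun t => ?_)
      show |f t| ≤ f t ^ 2 / K + K / 4
      rw [div_add' _ _ _ hK0.ne', le_div_iff₀ hK0]
      have key : f t ^ 2 + K / 4 * K - |f t| * K = (|f t| - K / 2) ^ 2 := by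
        rw [← sq_abs (f t)]; ring
      linarith [sq_nonneg (|f t| - K / 2), key]
    have hcalc : ∫ t in Icc (0:ℝ) l, (f t ^ 2 / K + K / 4)
        = (∫ t in Icc (0:ℝ) l, f t ^ 2) / K + K / 4 * l := by
      rw [integral_add (hsq.div_const K) (integrable_const _), integral_div,
        setIntegral_const, measureReal_def, hvol, smul_eq_mul, mul_comm]
    calc ∫ t in Icc (0:ℝ) l, |f t| ≤ (∫ t in Icc (0:ℝ) l, f t ^ 2) / K + K / 4 * l := by
          rw [← hcalc]; exact hmono
      _ ≤ (K ^ 2 * l / 4) / K + K / 4 * l := by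
          gcongr
      _ = K * l / 2 := by field_simp; ring
  have h5 : |∫ t in Icc (0:ℝ) l, f t| ≤ K * l / 2 := by
    have h := norm_integral_le_integral_norm (μ := μ) f
    simp only [Real.norm_eq_abs] at h
    exact le_trans h h3
  -- identify ∫ f with θ l - θ 0 + τ l
  have hI : ∫ t in Icc (0:ℝ) l, f t = (θ l - θ 0) + τ * l := by
    have h6 : ∫ t in Icc (0:ℝ) l, f t = (∫ t in Icc (0:ℝ) l, θ' t) + τ * l := by
      rw [hf]
      rw [integral_add hintθ' (integrable_const τ), setIntegral_const, measureReal_def, hvol, smul_eq_mul,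
        mul_comm]
    have h7 : θ l - θ 0 = ∫ t in Icc (0:ℝ) l, θ' t := by
      have := hrep l ⟨hl.le, le_refl _⟩
      rw [this, intervalIntegral.integral_of_le hl.le, ← integral_Icc_eq_integral_Ioc]
      ring
    rw [h6, ← h7]
  rw [hI] at h5
  -- final arithmetic
  have habs : |τ * l| - |(θ l - θ 0) + τ * l| ≤ |θ 0 - θ l| := by
    have h := abs_sub_abs_le_abs_sub (τ * l) ((θ l - θ 0) + τ * l)
    have : τ * l - ((θ l - θ 0) + τ * l) = θ 0 - θ l := by ring
    rwa [this] at h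
  have hτl : |τ| * l > n * π + K * l := by
    have h := mul_lt_mul_of_pos_right hτ hl
    calc (n:ℝ) * π + K * l = (n * π / l + K) * l := by field_simp
      _ < |τ| * l := h
  rw [abs_mul, abs_of_pos hl] at habs
  linarith [habs, h5, hτl, mul_pos hK0 hl]
end

section
/- Suppose the constant torsion satisfies |τ| > nπ/l + max|κ|. Then any minimizer θ_min of E over W^{1,4}([0,l]) has at least n singular points, i.e., at least n points t with θ_min(t) ∈ π/2 + πℤ. -/
open MeasureTheory Set Real
open scoped ENNReal


lemma count_singular (l : ℝ) (hl : 0 ≤ l) (n : ℕ) (θ : ℝ → ℝ)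
    (hc : ContinuousOn θ (Icc 0 l)) (hgap : (n:ℝ) * π < |θ l - θ 0|) :
    ∃ f : Fin n → ℝ, Function.Injective f ∧
      ∀ i, f i ∈ Icc (0:ℝ) l ∧ ∃ k : ℤ, θ (f i) = π / 2 + k * π := by
  have hπ : (0:ℝ) < π := Real.pi_pos
  set m := min (θ 0) (θ l) with hm
  set M := max (θ 0) (θ l) with hM
  have hMm : (n:ℝ) * π < M - m := by
    rw [hM, hm, max_sub_min_eq_abs']; rw [abs_sub_comm]; exact hgap
  set k₀ : ℤ := ⌈(m - π/2)/π⌉ with hk₀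
  have h1 : m ≤ π/2 + (k₀:ℝ)*π := by
    have h := Int.le_ceil ((m - π/2)/π)
    rw [div_le_iff₀ hπ] at h
    linarith
  have h2 : π/2 + (k₀:ℝ)*π < m + π := by
    have h := Int.ceil_lt_add_one ((m - π/2)/π)
    have h2' : ((k₀:ℝ) - 1) < (m - π/2)/π := by rw [hk₀]; linarith
    rw [lt_div_iff₀ hπ] at h2'
    linarith
  have hval : ∀ i : Fin n, ∃ t ∈ Icc (0:ℝ) l, θ t = π/2 + ((k₀ + (i:ℕ) : ℤ) : ℝ)*π := by
    intro i
    have hi : (i:ℕ) < n := i.isLt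
    have hv1 : m ≤ π/2 + ((k₀ + (i:ℕ) : ℤ):ℝ)*π := by
      push_cast
      have : (0:ℝ) ≤ (i:ℕ) := Nat.cast_nonneg _
      nlinarith
    have hv2 : π/2 + ((k₀ + (i:ℕ) : ℤ):ℝ)*π ≤ M := by
      push_cast
      have : ((i:ℕ):ℝ) ≤ (n:ℝ) - 1 := by
        have : ((i:ℕ):ℝ) + 1 ≤ n := by exact_mod_cast hi
        linarith
      nlinarith
    have hsub := intermediate_value_uIcc (a := 0) (b := l) (f := θ)
      (by rwa [Set.uIcc_of_le hl])
    have hmem : π/2 + ((k₀ + (i:ℕ) : ℤ):ℝ)*π ∈ Set.uIcc (θ 0) (θ l) := by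
      rw [Set.uIcc, ← hm, ← hM]
      exact ⟨hv1, hv2⟩
    obtain ⟨t, ht, hθt⟩ := hsub hmem
    exact ⟨t, by rwa [Set.uIcc_of_le hl] at ht, hθt⟩
  choose f hf hfv using hval
  refine ⟨f, ?_, fun i => ⟨hf i, ⟨k₀ + (i:ℕ), hfv i⟩⟩⟩
  intro i j hij
  have heq : π/2 + ((k₀ + (i:ℕ) : ℤ):ℝ)*π = π/2 + ((k₀ + (j:ℕ) : ℤ):ℝ)*π := by
    rw [← hfv i, ← hfv j, hij]
  have : ((k₀ + (i:ℕ) : ℤ):ℝ) = ((k₀ + (j:ℕ) : ℤ):ℝ) := by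
    have := mul_right_cancel₀ hπ.ne' (by linarith : ((k₀ + (i:ℕ) : ℤ):ℝ)*π = ((k₀ + (j:ℕ) : ℤ):ℝ)*π)
    exact this
  have : ((i:ℕ):ℝ) = ((j:ℕ):ℝ) := by push_cast at this; linarith
  exact Fin.ext (by exact_mod_cast this)

/-- Theorem 1.3: if the constant torsion satisfies `|τ| > nπ/l + max|κ|`, then
any minimizer of `E` over `W^{1,4}([0,l])` has at least `n` singular points,
i.e., `n` distinct points `t` with `θ(t) ∈ π/2 + πℤ`. -/
theorem minimizer_singular_points (l : ℝ) (hl : 0 < l) (κ : ℝ → ℝ) (τ : ℝ) (n : ℕ)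
    (hκ : ContinuousOn κ (Icc 0 l)) (hκ0 : ∀ t ∈ Icc (0:ℝ) l, κ t ≠ 0)
    (hτ : |τ| > n * π / l + sSup ((fun t => |κ t|) '' Icc (0:ℝ) l))
    (θmin θmin' : ℝ → ℝ)
    (hrep : ∀ x ∈ Icc (0:ℝ) l, θmin x = θmin 0 + ∫ t in (0:ℝ)..x, θmin' t)
    (hLp : MemLp θmin' 4 (volume.restrict (Icc (0:ℝ) l)))
    (hmin : ∀ θ θ' : ℝ → ℝ,
      (∀ x ∈ Icc (0:ℝ) l, θ x = θ 0 + ∫ t in (0:ℝ)..x, θ' t) →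
      MemLp θ' 4 (volume.restrict (Icc (0:ℝ) l)) →
      bendingEnergy l κ (fun _ => τ) θmin θmin' ≤ bendingEnergy l κ (fun _ => τ) θ θ') :
    ∃ f : Fin n → ℝ, Function.Injective f ∧
      ∀ i, f i ∈ Icc (0:ℝ) l ∧ ∃ k : ℤ, θmin (f i) = π / 2 + k * π := by
  set K := sSup ((fun t => |κ t|) '' Icc (0:ℝ) l) with hKdef
  have h0mem : (0:ℝ) ∈ Icc (0:ℝ) l := ⟨le_refl _, hl.le⟩
  have hbdd : BddAbove ((fun t => |κ t|) '' Icc (0:ℝ) l) :=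
    (isCompact_Icc.image_of_continuousOn hκ.abs).bddAbove
  have hK : ∀ t ∈ Icc (0:ℝ) l, |κ t| ≤ K := fun t ht => le_csSup hbdd ⟨t, ht, rfl⟩
  have hK0 : 0 < K := lt_of_lt_of_le (abs_pos.mpr (hκ0 0 h0mem)) (hK 0 h0mem)
  -- integrability of θmin'
  have hint : IntegrableOn θmin' (Icc (0:ℝ) l) volume :=
    (hLp.mono_exponent (by norm_num)).integrable le_rfl
  -- continuity of θmin on [0,l]
  have hcont : ContinuousOn θmin (Icc (0:ℝ) l) := by
    have h1 : ContinuousOn (fun x => θmin 0 + ∫ t in (0:ℝ)..x, θmin' t) (Icc (0:ℝ) l) := by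
      apply continuousOn_const.add
      have := intervalIntegral.continuousOn_primitive_interval
        (a := 0) (b := l) (f := θmin') (μ := volume) (by rwa [Set.uIcc_of_le hl.le])
      rwa [Set.uIcc_of_le hl.le] at this
    exact h1.congr hrep
  -- competitor energy bound
  have haK : ∀ t ∈ Icc (0:ℝ) l, ∀ c : ℝ, κ t ^ 2 * cos c ^ 2 ≤ K^2 := by
    intro t ht c
    have h1 := hK t ht
    have h2 := abs_nonneg (κ t)
    have h3 : cos c ^ 2 ≤ 1 := cos_sq_le_one c
    have h4 : κ t ^ 2 = |κ t| ^ 2 := (sq_abs _).symm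
    nlinarith [sq_nonneg (κ t)]
  have hEmin : bendingEnergy l κ (fun _ => τ) θmin θmin' ≤ ENNReal.ofReal (K^2*l) := by
    have hrep0 : ∀ x ∈ Icc (0:ℝ) l,
        (fun t : ℝ => -(τ*t)) x = (fun t : ℝ => -(τ*t)) 0 + ∫ t in (0:ℝ)..x, (fun _ : ℝ => -τ) t := by
      intro x hx
      simp only [intervalIntegral.integral_const, smul_eq_mul, sub_zero, mul_zero, neg_zero,
        zero_add]
      ring
    have h := hmin (fun t => -(τ*t)) (fun _ => -τ) hrep0 (memLp_const _)
    refine h.trans ?_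
    unfold bendingEnergy
    have hpt : ∀ t ∈ Icc (0:ℝ) l,
        ENNReal.ofReal ((κ t ^ 2 * cos (-(τ*t)) ^ 2 + ((fun _ : ℝ => -τ) t + (fun _ : ℝ => τ) t) ^ 2) ^ 2) /
          ENNReal.ofReal (κ t ^ 2 * cos (-(τ*t)) ^ 2) ≤ ENNReal.ofReal (K^2) := by
      intro t ht
      set a := κ t ^ 2 * cos (-(τ*t)) ^ 2 with ha
      have ha0 : 0 ≤ a := by positivity
      have haK' : a ≤ K^2 := haK t ht _
      simp only [neg_add_cancel, ne_eq, OfNat.ofNat_ne_zero, not_false_eq_true, zero_pow,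
        add_zero]
      rcases eq_or_lt_of_le ha0 with h0 | h0
      · rw [← h0]
        simp
      · rw [← ENNReal.ofReal_div_of_pos h0]
        apply ENNReal.ofReal_le_ofReal
        rw [pow_two, mul_div_assoc, div_self h0.ne', mul_one]
        exact haK'
    calc ∫⁻ t in Icc (0:ℝ) l,
          ENNReal.ofReal ((κ t ^ 2 * cos (-(τ*t)) ^ 2 + ((fun _ : ℝ => -τ) t + (fun _ : ℝ => τ) t) ^ 2) ^ 2) /
            ENNReal.ofReal (κ t ^ 2 * cos (-(τ*t)) ^ 2)
        ≤ ∫⁻ _ in Icc (0:ℝ) l, ENNReal.ofReal (K^2) :=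
          lintegral_mono_ae ((ae_restrict_iff' measurableSet_Icc).mpr (ae_of_all _ hpt))
      _ = ENNReal.ofReal (K^2) * volume (Icc (0:ℝ) l) := setLIntegral_const _ _
      _ = ENNReal.ofReal (K^2*l) := by
          rw [Real.volume_Icc, sub_zero, ← ENNReal.ofReal_mul (by positivity)]
  -- quartic bound
  have hg4 : ∫⁻ t in Icc (0:ℝ) l, ENNReal.ofReal ((θmin' t + τ)^4)
      ≤ ENNReal.ofReal (K^4*l) := by
    have hpt : ∀ t ∈ Icc (0:ℝ) l,
        ENNReal.ofReal ((θmin' t + τ)^4) / ENNReal.ofReal (K^2) ≤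
        ENNReal.ofReal ((κ t ^ 2 * cos (θmin t) ^ 2 + (θmin' t + (fun _ : ℝ => τ) t) ^ 2) ^ 2) /
          ENNReal.ofReal (κ t ^ 2 * cos (θmin t) ^ 2) := by
      intro t ht
      set a := κ t ^ 2 * cos (θmin t) ^ 2 with ha
      set b := (θmin' t + τ)^2 with hb
      have ha0 : 0 ≤ a := by positivity
      have hb0 : 0 ≤ b := sq_nonneg _
      have haK' : a ≤ K^2 := haK t ht _
      have hb4 : (θmin' t + τ)^4 = b^2 := by rw [hb]; ring
      rcases eq_or_lt_of_le ha0 with h0 | h0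
      · rcases eq_or_lt_of_le hb0 with hb0' | hb0'
        · simp [hb4, ← hb0', ← h0]
        · rw [← h0]
          have : ENNReal.ofReal ((a + b)^2) / ENNReal.ofReal (0:ℝ) = ⊤ := by
            rw [ENNReal.ofReal_zero, ENNReal.div_zero]
            simp only [ne_eq, ENNReal.ofReal_eq_zero, not_le]
            nlinarith
          rw [← h0] at this
          rw [this]
          exact le_top
      · rw [← ENNReal.ofReal_div_of_pos h0, ← ENNReal.ofReal_div_of_pos (by positivity)]
        apply ENNReal.ofReal_le_ofReal
        rw [hb4, div_le_div_iff₀ (by positivity) h0]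
        nlinarith [mul_nonneg (mul_nonneg hb0 hb0) (sub_nonneg.mpr haK'),
          mul_pos h0 h0, mul_nonneg (mul_nonneg ha0 ha0) (sub_nonneg.mpr haK'),
          mul_nonneg (mul_nonneg ha0 hb0) (sub_nonneg.mpr haK'), sq_nonneg (a+b),
          mul_nonneg ha0 hb0, mul_nonneg (mul_nonneg ha0 ha0) hb0]
    have h1 : ∫⁻ t in Icc (0:ℝ) l, ENNReal.ofReal ((θmin' t + τ)^4) / ENNReal.ofReal (K^2)
        ≤ bendingEnergy l κ (fun _ => τ) θmin θmin' :=
      lintegral_mono_ae ((ae_restrict_iff' measurableSet_Icc).mpr (ae_of_all _ hpt))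
    have h2 := h1.trans hEmin
    rw [show (fun t => ENNReal.ofReal ((θmin' t + τ)^4) / ENNReal.ofReal (K^2))
        = (fun t => ENNReal.ofReal ((θmin' t + τ)^4) * (ENNReal.ofReal (K^2))⁻¹) from
        funext fun t => div_eq_mul_inv _ _] at h2
    rw [lintegral_mul_const' _ _ (by simp; positivity)] at h2
    rw [← div_eq_mul_inv,
      ENNReal.div_le_iff (ENNReal.ofReal_pos.mpr (by positivity)).ne' ENNReal.ofReal_ne_top] at h2
    refine h2.trans (le_of_eq ?_)
    rw [← ENNReal.ofReal_mul (by positivity)]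
    ring_nf
  -- L¹ bound via Hölder
  have hgmem : MemLp (fun t => θmin' t + τ) 4 (volume.restrict (Icc (0:ℝ) l)) :=
    hLp.add (memLp_const τ)
  have hg1 : ∫⁻ t in Icc (0:ℝ) l, (‖θmin' t + τ‖₊ : ℝ≥0∞) ≤ ENNReal.ofReal (K*l) := by
    have h := eLpNorm_le_eLpNorm_mul_rpow_measure_univ (p := 1) (q := 4) (by norm_num)
      hgmem.aestronglyMeasurable
    rw [eLpNorm_one_eq_lintegral_enorm,
      eLpNorm_eq_lintegral_rpow_enorm_toReal (by norm_num) (by norm_num)] at h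
    simp only [ENNReal.toReal_ofNat, ENNReal.toReal_one, Measure.restrict_apply_univ] at h
    have heq : ∀ t : ℝ, (‖θmin' t + τ‖ₑ) ^ (4:ℝ) = ENNReal.ofReal ((θmin' t + τ)^4) := by
      intro t
      rw [Real.enorm_eq_ofReal_abs, ENNReal.ofReal_rpow_of_nonneg (abs_nonneg _) (by norm_num)]
      congr 1
      rw [show (4:ℝ) = ((4:ℕ):ℝ) by norm_num, Real.rpow_natCast, ← abs_pow,
        abs_of_nonneg (by positivity)]
    simp_rw [heq] at h
    refine h.trans ?_
    rw [Real.volume_Icc, sub_zero]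
    calc (∫⁻ t in Icc (0:ℝ) l, ENNReal.ofReal ((θmin' t + τ)^4)) ^ ((1:ℝ)/4)
          * (ENNReal.ofReal l) ^ ((1:ℝ)/1 - (1:ℝ)/4)
        ≤ (ENNReal.ofReal (K^4*l)) ^ ((1:ℝ)/4) * (ENNReal.ofReal l) ^ ((1:ℝ)/1 - (1:ℝ)/4) := by
          gcongr
      _ = ENNReal.ofReal ((K^4*l) ^ ((1:ℝ)/4)) * ENNReal.ofReal (l ^ ((1:ℝ)/1 - (1:ℝ)/4)) := by
          rw [ENNReal.ofReal_rpow_of_nonneg (by positivity) (by norm_num),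
            ENNReal.ofReal_rpow_of_nonneg hl.le (by norm_num)]
      _ = ENNReal.ofReal ((K^4*l) ^ ((1:ℝ)/4) * l ^ ((1:ℝ)/1 - (1:ℝ)/4)) :=
          (ENNReal.ofReal_mul (by positivity)).symm
      _ = ENNReal.ofReal (K*l) := by
          congr 1
          rw [Real.mul_rpow (by positivity) hl.le, ← Real.rpow_natCast K 4,
            ← Real.rpow_mul hK0.le, mul_assoc, ← Real.rpow_add hl]
          norm_num
  -- real bound
  have hcint : IntegrableOn (fun _ : ℝ => τ) (Icc (0:ℝ) l) volume :=
    integrableOn_const (by rw [Real.volume_Icc]; exact ENNReal.ofReal_ne_top)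
  have hgint : IntegrableOn (fun t => θmin' t + τ) (Icc (0:ℝ) l) volume := hint.add hcint
  have habs : |∫ t in Icc (0:ℝ) l, (θmin' t + τ)| ≤ K*l := by
    have h2 : ENNReal.ofReal (∫ t in Icc (0:ℝ) l, ‖θmin' t + τ‖)
        = ∫⁻ t in Icc (0:ℝ) l, (‖θmin' t + τ‖₊ : ℝ≥0∞) :=
      ofReal_integral_norm_eq_lintegral_enorm hgint
    have h3 : ENNReal.ofReal (∫ t in Icc (0:ℝ) l, ‖θmin' t + τ‖) ≤ ENNReal.ofReal (K*l) :=
      h2 ▸ hg1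
    have h4 := (ENNReal.ofReal_le_ofReal_iff (by positivity)).mp h3
    calc |∫ t in Icc (0:ℝ) l, (θmin' t + τ)| ≤ ∫ t in Icc (0:ℝ) l, ‖θmin' t + τ‖ := by
          rw [← Real.norm_eq_abs]
          exact norm_integral_le_integral_norm _
      _ ≤ K*l := h4
  -- the gap
  have hgap : (n:ℝ) * π < |θmin l - θmin 0| := by
    have hrepl := hrep l ⟨hl.le, le_refl l⟩
    have hIoc : θmin l - θmin 0 = ∫ t in Icc (0:ℝ) l, θmin' t := by
      rw [hrepl, intervalIntegral.integral_of_le hl.le, ← integral_Icc_eq_integral_Ioc]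
      ring
    have hsplit : (∫ t in Icc (0:ℝ) l, (θmin' t + τ)) = (θmin l - θmin 0) + l * τ := by
      rw [integral_add hint hcint, ← hIoc]
      congr 1
      rw [setIntegral_const, Real.volume_real_Icc_of_le hl.le, sub_zero,
        smul_eq_mul]
    have hτl : (n:ℝ)*π + K*l < |τ| * l := by
      have hmul := mul_lt_mul_of_pos_right hτ hl
      rw [add_mul, div_mul_cancel₀ _ hl.ne'] at hmul
      linarith
    have hlt : l*τ = (∫ t in Icc (0:ℝ) l, (θmin' t + τ)) - (θmin l - θmin 0) := by
      rw [hsplit]; ring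
    have habs2 : |l * τ| ≤ |∫ t in Icc (0:ℝ) l, (θmin' t + τ)| + |θmin l - θmin 0| := by
      rw [hlt]
      exact abs_sub _ _
    have hlτ : |l * τ| = |τ| * l := by
      rw [abs_mul, abs_of_pos hl]; ring
    linarith
  exact count_singular l hl.le n θmin hcont hgap
end

section
/- Let θ ∈ W^{1,4}([0,l]) with E(θ) < ∞, and let t₀ be a singular point of θ (i.e., θ(t₀) ∈ π/2 + πℤ) with τ(t₀) ≠ 0. Then t₀ is isolated: there exists ε > 0 such that (t₀ − ε, t₀ + ε) ∩ [0,l] contains no singular point of θ other than t₀. -/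
open MeasureTheory Set Real
open scoped ENNReal

lemma ofReal_pow4 (r : ℝ) : ENNReal.ofReal (r ^ 4) = ENNReal.ofReal |r| ^ (4:ℝ) := by
  rw [ENNReal.ofReal_rpow_of_nonneg (abs_nonneg _) (by norm_num : (0:ℝ) ≤ 4)]
  congr 1
  have h : |r| ^ (4:ℝ) = |r| ^ (4:ℕ) := by
    rw [← Real.rpow_natCast |r| 4]; norm_num
  rw [h, pow_abs, abs_of_nonneg (by positivity)]

lemma holder4 {f : ℝ → ℝ} {s : Set ℝ} (hf : AEMeasurable f (volume.restrict s)) :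
    ∫⁻ x in s, ENNReal.ofReal |f x| ≤
      (∫⁻ x in s, ENNReal.ofReal (f x ^ 4)) ^ ((1:ℝ)/4) * (volume s) ^ ((3:ℝ)/4) := by
  have hpq : Real.HolderConjugate 4 (4/3) := by constructor <;> norm_num
  have hfm : AEMeasurable (fun x => ENNReal.ofReal |f x|) (volume.restrict s) := by
    simpa [← Real.enorm_eq_ofReal_abs] using hf.enorm
  have h := ENNReal.lintegral_mul_le_Lp_mul_Lq (volume.restrict s) hpq hfm aemeasurable_const
    (g := fun _ => (1:ℝ≥0∞))
  simp only [mul_one, Pi.mul_apply, ENNReal.one_rpow, lintegral_const,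
    Measure.restrict_apply_univ, one_mul] at h
  calc ∫⁻ x in s, ENNReal.ofReal |f x|
      ≤ (∫⁻ x in s, ENNReal.ofReal |f x| ^ (4:ℝ)) ^ ((1:ℝ)/4) * (volume s) ^ ((1:ℝ)/(4/3)) := h
    _ = (∫⁻ x in s, ENNReal.ofReal (f x ^ 4)) ^ ((1:ℝ)/4) * (volume s) ^ ((3:ℝ)/4) := by
        congr 2
        · exact lintegral_congr fun x => (ofReal_pow4 (f x)).symm
        · norm_num

lemma const_mul_le_abs_intervalIntegral {g : ℝ → ℝ} {a b m : ℝ} (hab : a ≤ b)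
    (hg : IntervalIntegrable g volume a b)
    (hm : (∀ x ∈ Icc a b, m ≤ g x) ∨ (∀ x ∈ Icc a b, g x ≤ -m)) :
    m * (b - a) ≤ |∫ x in a..b, g x| := by
  rcases hm with hm | hm
  · have h1 : ∫ x in a..b, (m:ℝ) ≤ ∫ x in a..b, g x :=
      intervalIntegral.integral_mono_on hab intervalIntegrable_const hg hm
    rw [intervalIntegral.integral_const, smul_eq_mul] at h1
    calc m * (b-a) = (b-a) * m := mul_comm _ _
      _ ≤ ∫ x in a..b, g x := h1
      _ ≤ |∫ x in a..b, g x| := le_abs_self _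
  · have h1 : ∫ x in a..b, g x ≤ ∫ x in a..b, (-m:ℝ) :=
      intervalIntegral.integral_mono_on hab hg intervalIntegrable_const hm
    rw [intervalIntegral.integral_const, smul_eq_mul] at h1
    calc m * (b-a) = -((b-a) * -m) := by ring
      _ ≤ -(∫ x in a..b, g x) := by linarith
      _ ≤ |∫ x in a..b, g x| := neg_le_abs _

lemma energy_pointwise {aR bR C : ℝ} (hC : aR ≤ C) (ha : 0 ≤ aR)
    (hfin : ENNReal.ofReal ((aR + bR ^ 2) ^ 2) / ENNReal.ofReal aR ≠ ∞) :
    ENNReal.ofReal (bR ^ 4) ≤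
      ENNReal.ofReal C * (ENNReal.ofReal ((aR + bR ^ 2) ^ 2) / ENNReal.ofReal aR) := by
  rcases eq_or_lt_of_le ha with h0 | hpos
  · by_cases hb : bR = 0
    · simp [hb]
    · exfalso
      apply hfin
      have hnum : (0:ℝ) < (aR + bR ^ 2) ^ 2 := by
        have : (0:ℝ) < bR ^ 2 := by positivity
        nlinarith
      have hz : ENNReal.ofReal aR = 0 := by rw [← h0]; simp
      rw [hz, ENNReal.div_zero ((ENNReal.ofReal_pos.mpr hnum).ne')]
  · have h1 : bR ^ 4 ≤ (aR + bR ^ 2) ^ 2 := by nlinarith [sq_nonneg bR]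
    have hnum : (0:ℝ) ≤ (aR + bR ^ 2) ^ 2 := sq_nonneg _
    have h2 : (aR + bR ^ 2) ^ 2 ≤ C * ((aR + bR ^ 2) ^ 2 / aR) := by
      have he : aR * ((aR + bR ^ 2) ^ 2 / aR) = (aR + bR ^ 2) ^ 2 :=
        mul_div_cancel₀ _ hpos.ne'
      nlinarith [mul_le_mul_of_nonneg_right hC (div_nonneg hnum ha)]
    rw [← ENNReal.ofReal_div_of_pos hpos, ← ENNReal.ofReal_mul (le_trans ha hC)]
    exact ENNReal.ofReal_le_ofReal (h1.trans h2)

lemma abs_cos_le_abs_sub {u v : ℝ} (hv : Real.cos v = 0) : |Real.cos u| ≤ |u - v| := by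
  conv_lhs => rw [show u = u - v + v by ring]
  rw [Real.cos_add, hv, mul_zero, zero_sub, abs_neg, abs_mul]
  calc |Real.sin (u-v)| * |Real.sin v| ≤ |Real.sin (u-v)| * 1 := by
        exact mul_le_mul_of_nonneg_left (Real.abs_sin_le_one _) (abs_nonneg _)
    _ = |Real.sin (u - v)| := mul_one _
    _ ≤ |u - v| := Real.abs_sin_le_abs

/-- Theorem 6.3: if `E(θ) < ∞` and `t₀` is a singular point of `θ` with
`τ(t₀) ≠ 0`, then `t₀` is an isolated singular point. -/
theorem singular_points_isolated (l : ℝ) (hl : 0 < l) (κ τ θ θ' : ℝ → ℝ)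
    (hκ : ContinuousOn κ (Icc 0 l)) (hκ0 : ∀ t ∈ Icc (0:ℝ) l, κ t ≠ 0)
    (hτ : ContinuousOn τ (Icc 0 l))
    (hrep : ∀ x ∈ Icc (0:ℝ) l, θ x = θ 0 + ∫ t in (0:ℝ)..x, θ' t)
    (hLp : MemLp θ' 4 (volume.restrict (Icc (0:ℝ) l)))
    (hfin : bendingEnergy l κ τ θ θ' ≠ ∞)
    (t₀ : ℝ) (ht₀ : t₀ ∈ Icc (0:ℝ) l)
    (hsing : ∃ k : ℤ, θ t₀ = π / 2 + k * π) (hτ0 : τ t₀ ≠ 0) :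
    ∃ ε > 0, ∀ t ∈ Ioo (t₀ - ε) (t₀ + ε) ∩ Icc (0:ℝ) l,
      t ≠ t₀ → ¬∃ k : ℤ, θ t = π / 2 + k * π := by
  obtain ⟨k₀, hk₀⟩ := hsing
  have hIccm : MeasurableSet (Icc (0:ℝ) l) := measurableSet_Icc
  haveI : IsFiniteMeasure (volume.restrict (Icc (0:ℝ) l)) :=
    ⟨by rw [Measure.restrict_apply_univ]; exact measure_Icc_lt_top⟩
  have h0mem : (0:ℝ) ∈ Icc (0:ℝ) l := ⟨le_refl 0, hl.le⟩
  have hInt : IntegrableOn θ' (Icc 0 l) volume := hLp.integrable (by norm_num)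
  have hiv : ∀ {a b : ℝ}, a ∈ Icc (0:ℝ) l → b ∈ Icc (0:ℝ) l →
      IntervalIntegrable θ' volume a b := fun {a b} ha hb =>
    intervalIntegrable_iff.mpr (hInt.mono_set (uIoc_subset_uIcc.trans (uIcc_subset_Icc ha hb)))
  -- continuity of θ on [0, l]
  have hθc : ContinuousOn θ (Icc 0 l) := by
    have h1 : ContinuousOn (fun x => θ 0 + ∫ t in (0:ℝ)..x, θ' t) (Icc 0 l) := by
      apply continuousOn_const.add
      rw [← uIcc_of_le hl.le]
      exact intervalIntegral.continuousOn_primitive_interval (by rwa [uIcc_of_le hl.le])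
    exact h1.congr fun x hx => hrep x hx
  -- the L⁴ quantity
  set K4 : ℝ≥0∞ := ∫⁻ x in Icc (0:ℝ) l, ENNReal.ofReal (θ' x ^ 4) with hK4def
  have hK4 : K4 ≠ ∞ := by
    have h1 := hLp.2.ne
    rw [eLpNorm_eq_lintegral_rpow_enorm_toReal (by norm_num) (by norm_num)] at h1
    simp only [ENNReal.toReal_ofNat] at h1
    have heq : K4 = ∫⁻ x in Icc (0:ℝ) l, ‖θ' x‖ₑ ^ (4:ℝ) := by
      refine lintegral_congr fun x => ?_
      rw [ofReal_pow4, Real.enorm_eq_ofReal_abs]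
    rw [heq]
    intro htop
    rw [htop] at h1
    simp [ENNReal.top_rpow_of_pos (by norm_num : (0:ℝ) < 1/4)] at h1
  set KR : ℝ := (K4 ^ ((1:ℝ)/4)).toReal with hKRdef
  have hKR0 : 0 ≤ KR := ENNReal.toReal_nonneg
  -- representation of increments
  have hsubInt : ∀ x ∈ Icc (0:ℝ) l, θ x - θ t₀ = ∫ s in t₀..x, θ' s := by
    intro x hx
    have hadd := intervalIntegral.integral_add_adjacent_intervals (hiv h0mem ht₀) (hiv ht₀ hx)
    have e1 := hrep x hx
    have e2 := hrep t₀ ht₀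
    linarith
  -- Hölder estimate on θ
  have hθH : ∀ x ∈ Icc (0:ℝ) l, |θ x - θ t₀| ≤ KR * |x - t₀| ^ ((3:ℝ)/4) := by
    intro x hx
    have hI : uIoc t₀ x ⊆ Icc (0:ℝ) l := uIoc_subset_uIcc.trans (uIcc_subset_Icc ht₀ hx)
    have haem : AEMeasurable θ' (volume.restrict (uIoc t₀ x)) :=
      hLp.aestronglyMeasurable.aemeasurable.mono_measure (Measure.restrict_mono hI le_rfl)
    have hvol : volume (uIoc t₀ x) = ENNReal.ofReal |x - t₀| := by
      rw [uIoc, Real.volume_Ioc]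
      congr 1
      rw [max_sub_min_eq_abs, abs_sub_comm]
    have hlin : (∫⁻ t in uIoc t₀ x, ENNReal.ofReal (θ' t ^ 4)) ≤ K4 :=
      lintegral_mono' (Measure.restrict_mono hI le_rfl) le_rfl
    have hrhs_ne : K4 ^ ((1:ℝ)/4) * (ENNReal.ofReal |x - t₀|) ^ ((3:ℝ)/4) ≠ ∞ :=
      ENNReal.mul_ne_top (ENNReal.rpow_ne_top_of_nonneg (by norm_num) hK4)
        (ENNReal.rpow_ne_top_of_nonneg (by norm_num) ENNReal.ofReal_ne_top)
    have hmain : (∫⁻ t in uIoc t₀ x, ENNReal.ofReal |θ' t|) ≤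
        K4 ^ ((1:ℝ)/4) * (ENNReal.ofReal |x - t₀|) ^ ((3:ℝ)/4) := by
      refine (holder4 haem).trans ?_
      rw [hvol]
      exact mul_le_mul' (ENNReal.rpow_le_rpow hlin (by norm_num)) le_rfl
    have hint2 : IntegrableOn θ' (uIoc t₀ x) volume := hInt.mono_set hI
    calc |θ x - θ t₀| = |∫ s in t₀..x, θ' s| := by rw [hsubInt x hx]
      _ = ‖∫ s in t₀..x, θ' s‖ := (Real.norm_eq_abs _).symm
      _ ≤ ∫ s in uIoc t₀ x, ‖θ' s‖ := intervalIntegral.norm_integral_le_integral_norm_uIoc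
      _ = (∫⁻ s in uIoc t₀ x, ENNReal.ofReal |θ' s|).toReal := by
          rw [integral_eq_lintegral_of_nonneg_ae
            (Filter.Eventually.of_forall fun s => norm_nonneg _)
            hint2.aestronglyMeasurable.norm]
          simp only [Real.norm_eq_abs]
      _ ≤ (K4 ^ ((1:ℝ)/4) * (ENNReal.ofReal |x - t₀|) ^ ((3:ℝ)/4)).toReal :=
          ENNReal.toReal_mono hrhs_ne hmain
      _ = KR * |x - t₀| ^ ((3:ℝ)/4) := by
          rw [ENNReal.toReal_mul]
          congr 1
          rw [← ENNReal.toReal_rpow, ENNReal.toReal_ofReal (abs_nonneg _)]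
  -- bound on κ²
  obtain ⟨Cκ, hCκ⟩ := isCompact_Icc.exists_bound_of_continuousOn hκ
  set A : ℝ := Cκ ^ 2 with hAdef
  have hA0 : 0 ≤ A := sq_nonneg _
  have hA : ∀ x ∈ Icc (0:ℝ) l, κ x ^ 2 ≤ A := by
    intro x hx
    have h1 := hCκ x hx
    rw [Real.norm_eq_abs] at h1
    nlinarith [abs_nonneg (κ x), sq_abs (κ x)]
  -- cos at t₀
  have hcos0 : Real.cos (θ t₀) = 0 := by
    rw [hk₀]
    simp [Real.cos_add, Real.sin_int_mul_pi]
  -- energy finiteness a.e.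
  have hFae : AEMeasurable (fun t => ENNReal.ofReal ((κ t ^ 2 * cos (θ t) ^ 2 + (θ' t + τ t) ^ 2) ^ 2) /
      ENNReal.ofReal (κ t ^ 2 * cos (θ t) ^ 2)) (volume.restrict (Icc (0:ℝ) l)) := by
    have hκm : AEMeasurable κ (volume.restrict (Icc (0:ℝ) l)) := hκ.aemeasurable hIccm
    have hτm : AEMeasurable τ (volume.restrict (Icc (0:ℝ) l)) := hτ.aemeasurable hIccm
    have hθm : AEMeasurable θ (volume.restrict (Icc (0:ℝ) l)) := hθc.aemeasurable hIccm
    have hθ'm := hLp.aestronglyMeasurable.aemeasurable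
    have hcosm : AEMeasurable (fun t => Real.cos (θ t)) (volume.restrict (Icc (0:ℝ) l)) :=
      Real.measurable_cos.comp_aemeasurable hθm
    have hden : AEMeasurable (fun t => κ t ^ 2 * Real.cos (θ t) ^ 2)
        (volume.restrict (Icc (0:ℝ) l)) := (hκm.pow_const 2).mul (hcosm.pow_const 2)
    exact (ENNReal.measurable_ofReal.comp_aemeasurable
        ((hden.add ((hθ'm.add hτm).pow_const 2)).pow_const 2)).div
      (ENNReal.measurable_ofReal.comp_aemeasurable hden)
  have hFlt : ∀ᵐ x ∂(volume.restrict (Icc (0:ℝ) l)),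
      ENNReal.ofReal ((κ x ^ 2 * cos (θ x) ^ 2 + (θ' x + τ x) ^ 2) ^ 2) /
        ENNReal.ofReal (κ x ^ 2 * cos (θ x) ^ 2) < ∞ :=
    ae_lt_top' hFae hfin
  -- constants
  set m : ℝ := |τ t₀| / 2 with hmdef
  have hm0 : 0 < m := by
    have : 0 < |τ t₀| := abs_pos.mpr hτ0
    linarith
  set E : ℝ := (bendingEnergy l κ τ θ θ').toReal with hEdef
  have hE0 : 0 ≤ E := ENNReal.toReal_nonneg
  set B : ℝ := A * KR ^ 2 * E + 1 with hBdef
  have hB0 : 0 < B := by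
    have : 0 ≤ A * KR ^ 2 * E := mul_nonneg (mul_nonneg hA0 (sq_nonneg _)) hE0
    linarith
  -- continuity of τ at t₀
  obtain ⟨δ, hδ0, hδ⟩ := Metric.continuousWithinAt_iff.mp (hτ t₀ ht₀) m hm0
  -- choice of ε
  set ε : ℝ := min (δ/2) (min ((π/2/(KR+1)) ^ ((4:ℝ)/3)) ((m^4/B)^2)) with hεdef
  have hε0 : 0 < ε := by
    apply lt_min (by positivity)
    apply lt_min
    · apply Real.rpow_pos_of_pos
      have := Real.pi_pos
      positivity
    · have h4 : 0 < m ^ 4 := by positivity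
      positivity
  refine ⟨ε, hε0, ?_⟩
  rintro t ⟨htI, htIcc⟩ htne ⟨k', hk'⟩
  set d : ℝ := |t - t₀| with hddef
  have hd0 : 0 < d := abs_pos.mpr (sub_ne_zero.mpr htne)
  have hdε : d < ε := abs_sub_lt_iff.mpr ⟨by linarith [htI.2], by linarith [htI.1]⟩
  -- θ t = θ t₀
  have hd34 : d ^ ((3:ℝ)/4) ≤ (π/2) / (KR+1) := by
    have h1 : d ≤ (π/2/(KR+1)) ^ ((4:ℝ)/3) :=
      le_of_lt (hdε.trans_le ((min_le_right _ _).trans (min_le_left _ _)))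
    have h2 := Real.rpow_le_rpow hd0.le h1 (by norm_num : (0:ℝ) ≤ 3/4)
    rwa [← Real.rpow_mul (by positivity : (0:ℝ) ≤ π/2/(KR+1)),
      show ((4:ℝ)/3) * (3/4) = 1 by norm_num, Real.rpow_one] at h2
  have hθtt : |θ t - θ t₀| ≤ π/2 := by
    refine (hθH t htIcc).trans ?_
    calc KR * d ^ ((3:ℝ)/4) ≤ (KR+1) * ((π/2)/(KR+1)) := by
          apply mul_le_mul (by linarith) hd34 (Real.rpow_nonneg (abs_nonneg _) _) (by linarith)
      _ = π/2 := by field_simp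
  have hθeq : θ t = θ t₀ := by
    have hdiff : θ t - θ t₀ = ((k' - k₀ : ℤ) : ℝ) * π := by
      push_cast
      rw [hk', hk₀]; ring
    have habs : |((k' - k₀ : ℤ) : ℝ)| * π ≤ π/2 := by
      have := hθtt
      rw [hdiff, abs_mul, abs_of_nonneg Real.pi_pos.le] at this
      exact this
    have hz : (k' - k₀ : ℤ) = 0 := by
      by_contra hne
      have h1 : (1:ℝ) ≤ |((k' - k₀:ℤ):ℝ)| := by
        rw [← Int.cast_abs]
        exact_mod_cast Int.one_le_abs hne
      nlinarith [Real.pi_gt_three]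
    have : θ t - θ t₀ = 0 := by rw [hdiff, hz]; simp
    linarith
  -- interval setup
  set a : ℝ := min t₀ t with hadef
  set b : ℝ := max t₀ t with hbdef
  have hamem : a ∈ Icc (0:ℝ) l := ⟨le_min ht₀.1 htIcc.1, (min_le_left _ _).trans ht₀.2⟩
  have hbmem : b ∈ Icc (0:ℝ) l := ⟨le_trans ht₀.1 (le_max_left _ _), max_le ht₀.2 htIcc.2⟩
  have hab : a ≤ b := min_le_max
  have hba : b - a = d := by
    rw [hddef, hadef, hbdef, max_sub_min_eq_abs, abs_sub_comm]
  have hIsub : Icc a b ⊆ Icc (0:ℝ) l := Icc_subset_Icc hamem.1 hbmem.2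
  have hIsub' : Ioc a b ⊆ Icc (0:ℝ) l := Ioc_subset_Icc_self.trans hIsub
  have hat₀ : a ≤ t₀ := min_le_left _ _
  have ht₀b : t₀ ≤ b := le_max_left _ _
  have hxd : ∀ x ∈ Icc a b, |x - t₀| ≤ d := by
    intro x hx
    rw [abs_le]
    constructor <;> [linarith [hx.1, hba]; linarith [hx.2, hba]]
  -- τ window
  have hτwin : ∀ x ∈ Icc a b, |τ x - τ t₀| < m := by
    intro x hx
    have h1 : dist x t₀ < δ := by
      rw [Real.dist_eq]
      calc |x - t₀| ≤ d := hxd x hx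
        _ < ε := hdε
        _ ≤ δ/2 := min_le_left _ _
        _ < δ := by linarith
    have := hδ (hIsub hx) h1
    rwa [Real.dist_eq] at this
  have hτint : IntervalIntegrable τ volume a b := by
    apply ContinuousOn.intervalIntegrable
    rw [uIcc_of_le hab]
    exact hτ.mono hIsub
  have hmd : m * (b - a) ≤ |∫ x in a..b, τ x| := by
    apply const_mul_le_abs_intervalIntegral hab hτint
    rcases le_or_gt 0 (τ t₀) with hs | hs
    · left
      intro x hx
      have h1 := hτwin x hx
      rw [hmdef, abs_of_nonneg hs] at h1 ⊢
      have h2 := abs_lt.mp h1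
      linarith [h2.1]
    · right
      intro x hx
      have h1 := hτwin x hx
      rw [hmdef, abs_of_neg hs] at h1 ⊢
      have h2 := abs_lt.mp h1
      linarith [h2.2]
  -- ∫ θ' over a..b vanishes
  have hθ'ab : (∫ x in a..b, θ' x) = 0 := by
    rcases le_total t₀ t with h | h
    · rw [hadef, hbdef, min_eq_left h, max_eq_right h]
      rw [← hsubInt t htIcc, hθeq]; ring
    · rw [hadef, hbdef, min_eq_right h, max_eq_left h, intervalIntegral.integral_symm]
      rw [← hsubInt t htIcc, hθeq]; ring
  have hsum : (∫ x in a..b, (θ' x + τ x)) = ∫ x in a..b, τ x := by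
    rw [intervalIntegral.integral_add (hiv hamem hbmem) hτint, hθ'ab, zero_add]
  -- integrability of θ' + τ on (a, b]
  have hτi : IntegrableOn τ (Icc a b) volume := (hτ.mono hIsub).integrableOn_Icc
  have hfτ : IntegrableOn (fun x => θ' x + τ x) (Ioc a b) volume :=
    (hInt.mono_set hIsub').add (hτi.mono_set Ioc_subset_Icc_self)
  have haem2 : AEMeasurable (fun x => θ' x + τ x) (volume.restrict (Ioc a b)) :=
    hfτ.aestronglyMeasurable.aemeasurable
  have hvol2 : volume (Ioc a b) = ENNReal.ofReal d := by rw [Real.volume_Ioc, hba]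
  -- the constant C
  set C : ℝ := A * (KR * d ^ ((3:ℝ)/4)) ^ 2 with hCdef
  have hC0 : 0 ≤ C := mul_nonneg hA0 (sq_nonneg _)
  have hden : ∀ x ∈ Ioc a b, κ x ^ 2 * Real.cos (θ x) ^ 2 ≤ C := by
    intro x hx
    have hx' : x ∈ Icc (0:ℝ) l := hIsub' hx
    have h1 : |Real.cos (θ x)| ≤ KR * d ^ ((3:ℝ)/4) := by
      refine (abs_cos_le_abs_sub hcos0).trans ((hθH x hx').trans ?_)
      exact mul_le_mul_of_nonneg_left
        (Real.rpow_le_rpow (abs_nonneg _) (hxd x (Ioc_subset_Icc_self hx)) (by norm_num)) hKR0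
    have h3 : Real.cos (θ x) ^ 2 ≤ (KR * d ^ ((3:ℝ)/4)) ^ 2 := by
      rw [← sq_abs]
      exact pow_le_pow_left₀ (abs_nonneg _) h1 2
    exact mul_le_mul (hA x hx') h3 (sq_nonneg _) hA0
  -- energy bound on the lintegral of (θ' + τ)⁴
  have hFltI : ∀ᵐ x ∂(volume.restrict (Ioc a b)),
      ENNReal.ofReal ((κ x ^ 2 * cos (θ x) ^ 2 + (θ' x + τ x) ^ 2) ^ 2) /
        ENNReal.ofReal (κ x ^ 2 * cos (θ x) ^ 2) < ∞ :=
    hFlt.filter_mono (ae_mono (Measure.restrict_mono hIsub' le_rfl))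
  have hen : (∫⁻ x in Ioc a b, ENNReal.ofReal ((θ' x + τ x) ^ 4)) ≤
      ENNReal.ofReal C * bendingEnergy l κ τ θ θ' := by
    have hptwise : ∀ᵐ x ∂(volume.restrict (Ioc a b)),
        ENNReal.ofReal ((θ' x + τ x) ^ 4) ≤ ENNReal.ofReal C *
          (ENNReal.ofReal ((κ x ^ 2 * cos (θ x) ^ 2 + (θ' x + τ x) ^ 2) ^ 2) /
            ENNReal.ofReal (κ x ^ 2 * cos (θ x) ^ 2)) := by
      filter_upwards [hFltI, ae_restrict_mem measurableSet_Ioc] with x hFx hmem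
      exact energy_pointwise (hden x hmem) (by positivity) hFx.ne
    calc (∫⁻ x in Ioc a b, ENNReal.ofReal ((θ' x + τ x) ^ 4))
        ≤ ∫⁻ x in Ioc a b, ENNReal.ofReal C *
          (ENNReal.ofReal ((κ x ^ 2 * cos (θ x) ^ 2 + (θ' x + τ x) ^ 2) ^ 2) /
            ENNReal.ofReal (κ x ^ 2 * cos (θ x) ^ 2)) := lintegral_mono_ae hptwise
      _ = ENNReal.ofReal C * ∫⁻ x in Ioc a b,
          (ENNReal.ofReal ((κ x ^ 2 * cos (θ x) ^ 2 + (θ' x + τ x) ^ 2) ^ 2) /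
            ENNReal.ofReal (κ x ^ 2 * cos (θ x) ^ 2)) :=
          lintegral_const_mul' _ _ ENNReal.ofReal_ne_top
      _ ≤ ENNReal.ofReal C * bendingEnergy l κ τ θ θ' := by
          apply mul_le_mul_right
          exact lintegral_mono' (Measure.restrict_mono hIsub' le_rfl) le_rfl
  -- main Hölder chain
  have hrhs_ne2 : (ENNReal.ofReal C * bendingEnergy l κ τ θ θ') ^ ((1:ℝ)/4) *
      (ENNReal.ofReal d) ^ ((3:ℝ)/4) ≠ ∞ :=
    ENNReal.mul_ne_top
      (ENNReal.rpow_ne_top_of_nonneg (by norm_num)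
        (ENNReal.mul_ne_top ENNReal.ofReal_ne_top hfin))
      (ENNReal.rpow_ne_top_of_nonneg (by norm_num) ENNReal.ofReal_ne_top)
  have hmain2 : m * d ≤ (C * E) ^ ((1:ℝ)/4) * d ^ ((3:ℝ)/4) := by
    calc m * d = m * (b - a) := by rw [hba]
      _ ≤ |∫ x in a..b, τ x| := hmd
      _ = |∫ x in a..b, (θ' x + τ x)| := by rw [hsum]
      _ = ‖∫ x in a..b, (θ' x + τ x)‖ := (Real.norm_eq_abs _).symm
      _ ≤ ∫ x in uIoc a b, ‖θ' x + τ x‖ := intervalIntegral.norm_integral_le_integral_norm_uIoc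
      _ = (∫⁻ x in Ioc a b, ENNReal.ofReal |θ' x + τ x|).toReal := by
          rw [uIoc_of_le hab, integral_eq_lintegral_of_nonneg_ae
            (Filter.Eventually.of_forall fun x => norm_nonneg _)
            hfτ.aestronglyMeasurable.norm]
          simp only [Real.norm_eq_abs]
      _ ≤ ((ENNReal.ofReal C * bendingEnergy l κ τ θ θ') ^ ((1:ℝ)/4) *
          (ENNReal.ofReal d) ^ ((3:ℝ)/4)).toReal := by
          apply ENNReal.toReal_mono hrhs_ne2
          refine (holder4 haem2).trans ?_
          rw [hvol2]
          exact mul_le_mul' (ENNReal.rpow_le_rpow hen (by norm_num)) le_rfl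
      _ = (C * E) ^ ((1:ℝ)/4) * d ^ ((3:ℝ)/4) := by
          rw [ENNReal.toReal_mul, ← ENNReal.toReal_rpow, ← ENNReal.toReal_rpow,
            ENNReal.toReal_mul, ENNReal.toReal_ofReal hC0, ENNReal.toReal_ofReal hd0.le]
  -- final arithmetic
  have hCE0 : 0 ≤ C * E := mul_nonneg hC0 hE0
  have h4 : (m * d) ^ 4 ≤ (C * E) * d ^ ((3:ℝ)) := by
    have h1 := pow_le_pow_left₀ (mul_nonneg hm0.le hd0.le) hmain2 4
    have h2 : ((C * E) ^ ((1:ℝ)/4) * d ^ ((3:ℝ)/4)) ^ 4 = (C * E) * d ^ ((3:ℝ)) := by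
      rw [mul_pow, ← Real.rpow_natCast ((C * E) ^ ((1:ℝ)/4)) 4,
        ← Real.rpow_natCast (d ^ ((3:ℝ)/4)) 4,
        ← Real.rpow_mul hCE0, ← Real.rpow_mul hd0.le]
      norm_num
    rw [h2] at h1
    exact h1
  have hCE : C * E = (A * KR ^ 2 * E) * d ^ ((3:ℝ)/2) := by
    rw [hCdef, mul_pow]
    have h1 : (d ^ ((3:ℝ)/4)) ^ 2 = d ^ ((3:ℝ)/2) := by
      rw [← Real.rpow_natCast (d ^ ((3:ℝ)/4)) 2, ← Real.rpow_mul hd0.le]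
      norm_num
    rw [h1]
    ring
  have h5 : m ^ 4 * d ^ ((4:ℝ)) ≤ (A * KR ^ 2 * E) * d ^ ((9:ℝ)/2) := by
    have h1 : (m * d) ^ 4 = m ^ 4 * d ^ ((4:ℝ)) := by
      rw [mul_pow, ← Real.rpow_natCast d 4]
      norm_num
    have hd93 : d ^ ((3:ℝ)/2) * d ^ ((3:ℝ)) = d ^ ((9:ℝ)/2) := by
      rw [← Real.rpow_add hd0]; norm_num
    have h2 : (C * E) * d ^ ((3:ℝ)) = (A * KR ^ 2 * E) * d ^ ((9:ℝ)/2) := by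
      rw [hCE, ← hd93]; ring
    rw [← h1, ← h2]
    exact h4
  have h6 : m ^ 4 ≤ (A * KR ^ 2 * E) * d ^ ((1:ℝ)/2) := by
    have hd4 : (0:ℝ) < d ^ ((4:ℝ)) := Real.rpow_pos_of_pos hd0 _
    have hd14 : d ^ ((1:ℝ)/2) * d ^ ((4:ℝ)) = d ^ ((9:ℝ)/2) := by
      rw [← Real.rpow_add hd0]; norm_num
    have h1 : (A * KR ^ 2 * E) * d ^ ((9:ℝ)/2) =
        ((A * KR ^ 2 * E) * d ^ ((1:ℝ)/2)) * d ^ ((4:ℝ)) := by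
      rw [← hd14]; ring
    rw [h1] at h5
    exact le_of_mul_le_mul_right h5 hd4
  have h7 : d ^ ((1:ℝ)/2) ≤ m ^ 4 / B := by
    have h1 : d ≤ (m ^ 4 / B) ^ 2 :=
      le_of_lt (hdε.trans_le ((min_le_right _ _).trans (min_le_right _ _)))
    have h2 := Real.rpow_le_rpow hd0.le h1 (by norm_num : (0:ℝ) ≤ 1/2)
    have hmB0 : (0:ℝ) ≤ m ^ 4 / B := div_nonneg (by positivity) hB0.le
    rwa [← Real.rpow_natCast (m ^ 4 / B) 2, ← Real.rpow_mul hmB0,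
      show ((2:ℕ):ℝ) * (1/2) = 1 by norm_num, Real.rpow_one] at h2
  have hAKE0 : 0 ≤ A * KR ^ 2 * E := mul_nonneg (mul_nonneg hA0 (sq_nonneg _)) hE0
  have h8 : (A * KR ^ 2 * E) * d ^ ((1:ℝ)/2) ≤ (A * KR ^ 2 * E) * (m ^ 4 / B) :=
    mul_le_mul_of_nonneg_left h7 hAKE0
  have h9 : (A * KR ^ 2 * E) * (m ^ 4 / B) < B * (m ^ 4 / B) := by
    apply mul_lt_mul_of_pos_right _ (by positivity)
    rw [hBdef]
    linarith
  have h10 : B * (m ^ 4 / B) = m ^ 4 := by field_simp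
  have hcontr : m ^ 4 < m ^ 4 :=
    calc m ^ 4 ≤ (A * KR ^ 2 * E) * d ^ ((1:ℝ)/2) := h6
      _ ≤ (A * KR ^ 2 * E) * (m ^ 4 / B) := h8
      _ < B * (m ^ 4 / B) := h9
      _ = m ^ 4 := h10
  exact absurd hcontr (lt_irrefl _)
end
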